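/- Let 1 ≤ p ≤ 2 and 0 < α ≤ 1. Suppose that the α-snowflake of L_p(0,1) admits a bi-Lipschitz embedding into a Hilbert space, i.e. there exist a real Hilbert space H, a map T : L_p(0,1) → H, and constants A, B > 0 with A·‖f − g‖_p^α ≤ ‖T(f) − T(g)‖_H ≤ B·‖f − g‖_p^α for all f, g ∈ L_p(0,1). Then α ≤ p/2. -/

import Mathlib

open MeasureTheory
open RealInnerProductSpace Set


variable {H : Type*} [NormedAddCommGroup H] [InnerProductSpace ℝ H]

lemma quad_ineq (a b c d : H) :
    ‖a - c‖^2 + ‖b - d‖^2 ≤ ‖a - b‖^2 + ‖b - c‖^2 + ‖c - d‖^2 + ‖d - a‖^2 := by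
  have h : ∀ x y : H, ‖x - y‖^2 = ⟪x,x⟫ - 2*⟪x,y⟫ + ⟪y,y⟫ := fun x y => by
    rw [norm_sub_sq_real, real_inner_self_eq_norm_sq, real_inner_self_eq_norm_sq]
  have key : (0:ℝ) ≤ ‖(a + c) - (b + d)‖^2 := sq_nonneg _
  rw [h] at key
  have e1 : ⟪a+c, a+c⟫ = ⟪a,a⟫ + 2*⟪a,c⟫ + ⟪c,c⟫ := real_inner_add_add_self a c
  have e2 : ⟪b+d, b+d⟫ = ⟪b,b⟫ + 2*⟪b,d⟫ + ⟪d,d⟫ := real_inner_add_add_self b d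
  have e3 : ⟪a+c, b+d⟫ = ⟪a,b⟫ + ⟪a,d⟫ + ⟪c,b⟫ + ⟪c,d⟫ := by
    simp [inner_add_left, inner_add_right]; ring
  have c1 : ⟪c,b⟫ = ⟪b,c⟫ := real_inner_comm b c
  have c2 : ⟪d,a⟫ = ⟪a,d⟫ := real_inner_comm a d
  rw [h a c, h b d, h a b, h b c, h c d, h d a]
  linarith

def bneg {n : ℕ} (ε : Fin n → Bool) : Fin n → Bool := fun i => !(ε i)

@[simp] lemma bneg_bneg {n : ℕ} (ε : Fin n → Bool) : bneg (bneg ε) = ε := by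
  funext i; simp [bneg]

lemma bneg_cons {n : ℕ} (b : Bool) (ε : Fin n → Bool) :
    bneg (Fin.cons b ε : Fin (n+1) → Bool) = (Fin.cons (!b) (bneg ε) : Fin (n+1) → Bool) := by
  funext i
  cases i using Fin.cases <;> simp [bneg]

lemma update_cons_zero' {n : ℕ} (b v : Bool) (ε : Fin n → Bool) :
    Function.update (Fin.cons b ε : Fin (n+1) → Bool) 0 v = (Fin.cons v ε : Fin (n+1) → Bool) :=
  Fin.update_cons_zero ..

lemma update_cons_succ {n : ℕ} (b v : Bool) (ε : Fin n → Bool) (j : Fin n) :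
    Function.update (Fin.cons b ε : Fin (n+1) → Bool) j.succ v
      = (Fin.cons b (Function.update ε j v) : Fin (n+1) → Bool) :=
  (Fin.cons_update ..).symm

lemma sum_cube_succ {n : ℕ} (F : (Fin (n+1) → Bool) → ℝ) :
    ∑ ε' : Fin (n+1) → Bool, F ε'
      = ∑ ε : Fin n → Bool, (F (Fin.cons true ε) + F (Fin.cons false ε)) := by
  rw [← (Fin.consEquiv (fun _ => Bool)).sum_comp F, Fintype.sum_prod_type, Fintype.sum_bool,
    ← Finset.sum_add_distrib]
  rfl

lemma cube_neg_invol {n : ℕ} : Function.Involutive (bneg (n := n)) := bneg_bneg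

lemma sum_cube_neg {n : ℕ} (F : (Fin n → Bool) → ℝ) :
    ∑ ε : Fin n → Bool, F (bneg ε) = ∑ ε : Fin n → Bool, F ε :=
  Equiv.sum_comp (cube_neg_invol.toPerm) F

lemma enflo (n : ℕ) (g : (Fin n → Bool) → H) :
    ∑ ε : Fin n → Bool, ‖g ε - g (bneg ε)‖^2 ≤
      ∑ i : Fin n, ∑ ε : Fin n → Bool, ‖g ε - g (Function.update ε i (!(ε i)))‖^2 := by
  induction n with
  | zero =>
    have : ∀ ε : Fin 0 → Bool, bneg ε = ε := fun ε => funext fun i => i.elim0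
    simp [this]
  | succ n IH =>
    have lhs_eq : ∑ ε' : Fin (n+1) → Bool, ‖g ε' - g (bneg ε')‖^2
        = ∑ ε : Fin n → Bool, (‖g (Fin.cons true ε) - g (Fin.cons false (bneg ε))‖^2
            + ‖g (Fin.cons false ε) - g (Fin.cons true (bneg ε))‖^2) := by
      rw [sum_cube_succ (fun ε' => ‖g ε' - g (bneg ε')‖^2)]
      refine Finset.sum_congr rfl fun ε _ => ?_
      rw [bneg_cons, bneg_cons]
      norm_num
    have quad_step : ∀ ε : Fin n → Bool,
        ‖g (Fin.cons true ε) - g (Fin.cons false (bneg ε))‖^2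
          + ‖g (Fin.cons false ε) - g (Fin.cons true (bneg ε))‖^2
        ≤ ‖g (Fin.cons true ε) - g (Fin.cons true (bneg ε))‖^2
          + ‖g (Fin.cons true (bneg ε)) - g (Fin.cons false (bneg ε))‖^2
          + ‖g (Fin.cons false (bneg ε)) - g (Fin.cons false ε)‖^2
          + ‖g (Fin.cons false ε) - g (Fin.cons true ε)‖^2 := by
      intro ε
      have := quad_ineq (g (Fin.cons true ε)) (g (Fin.cons true (bneg ε)))
        (g (Fin.cons false (bneg ε))) (g (Fin.cons false ε))
      rw [norm_sub_rev (g (Fin.cons true (bneg ε))) (g (Fin.cons false ε))] at this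
      linarith
    have r1 : ∑ ε : Fin n → Bool,
          ‖g (Fin.cons true (bneg ε)) - g (Fin.cons false (bneg ε))‖^2
        = ∑ ε : Fin n → Bool, ‖g (Fin.cons false ε) - g (Fin.cons true ε)‖^2 := by
      rw [sum_cube_neg (fun ε => ‖g (Fin.cons true ε) - g (Fin.cons false ε)‖^2)]
      exact Finset.sum_congr rfl fun ε _ => by rw [norm_sub_rev]
    have r2 : ∑ ε : Fin n → Bool,
          ‖g (Fin.cons false (bneg ε)) - g (Fin.cons false ε)‖^2
        = ∑ ε : Fin n → Bool, ‖g (Fin.cons false ε) - g (Fin.cons false (bneg ε))‖^2 := by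
      rw [← sum_cube_neg
        (fun ε => ‖g (Fin.cons false (bneg ε)) - g (Fin.cons false ε)‖^2)]
      refine Finset.sum_congr rfl fun ε _ => ?_
      rw [bneg_bneg]
    have step1 : ∑ ε' : Fin (n+1) → Bool, ‖g ε' - g (bneg ε')‖^2
        ≤ (∑ ε : Fin n → Bool, ‖g (Fin.cons true ε) - g (Fin.cons true (bneg ε))‖^2)
          + (∑ ε : Fin n → Bool, ‖g (Fin.cons false ε) - g (Fin.cons false (bneg ε))‖^2)
          + 2 * ∑ ε : Fin n → Bool, ‖g (Fin.cons false ε) - g (Fin.cons true ε)‖^2 := by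
      rw [lhs_eq]
      calc _ ≤ ∑ ε : Fin n → Bool,
            (‖g (Fin.cons true ε) - g (Fin.cons true (bneg ε))‖^2
            + ‖g (Fin.cons true (bneg ε)) - g (Fin.cons false (bneg ε))‖^2
            + ‖g (Fin.cons false (bneg ε)) - g (Fin.cons false ε)‖^2
            + ‖g (Fin.cons false ε) - g (Fin.cons true ε)‖^2) :=
            Finset.sum_le_sum fun ε _ => quad_step ε
        _ = _ := by
            simp only [Finset.sum_add_distrib]
            rw [r1, r2]; ring
    have rhs_eq : ∑ i : Fin (n+1), ∑ ε' : Fin (n+1) → Bool,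
          ‖g ε' - g (Function.update ε' i (!(ε' i)))‖^2
        = (2 * ∑ ε : Fin n → Bool, ‖g (Fin.cons false ε) - g (Fin.cons true ε)‖^2)
          + ((∑ j : Fin n, ∑ ε : Fin n → Bool, ‖g (Fin.cons true ε)
                - g (Fin.cons true (Function.update ε j (!(ε j))))‖^2)
            + (∑ j : Fin n, ∑ ε : Fin n → Bool, ‖g (Fin.cons false ε)
                - g (Fin.cons false (Function.update ε j (!(ε j))))‖^2)) := by
      rw [Fin.sum_univ_succ]
      congr 1
      · rw [sum_cube_succ (fun ε' => ‖g ε' - g (Function.update ε' 0 (!(ε' 0)))‖^2),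
          Finset.mul_sum]
        refine Finset.sum_congr rfl fun ε _ => ?_
        simp only [Fin.cons_zero, Bool.not_true, Bool.not_false, update_cons_zero']
        rw [norm_sub_rev (g (Fin.cons true ε))]
        ring
      · rw [← Finset.sum_add_distrib]
        refine Finset.sum_congr rfl fun j _ => ?_
        rw [sum_cube_succ (fun ε' => ‖g ε' - g (Function.update ε' j.succ (!(ε' j.succ)))‖^2),
          ← Finset.sum_add_distrib]
        refine Finset.sum_congr rfl fun ε _ => ?_
        simp only [Fin.cons_succ, update_cons_succ]
    rw [rhs_eq]
    have IHt := IH (fun ε => g (Fin.cons true ε))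
    have IHf := IH (fun ε => g (Fin.cons false ε))
    linarith [step1]


noncomputable section CubeHelpers

abbrev μ01 : Measure ℝ := volume.restrict (Set.Ioo (0 : ℝ) 1)

lemma lp_coeFn_sum {E : Type*} [NormedAddCommGroup E] {q : ENNReal} {ι : Type*}
    (s : Finset ι) (f : ι → Lp E q μ01) :
    ⇑(∑ i ∈ s, f i) =ᵐ[μ01] fun x => ∑ i ∈ s, f i x := by
  classical
  induction s using Finset.induction_on with
  | empty => simp only [Finset.sum_empty]; exact Lp.coeFn_zero E q μ01
  | insert a s hnot IH =>
    rw [Finset.sum_insert hnot]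
    filter_upwards [Lp.coeFn_add (_ : Lp E q μ01) (∑ i ∈ _, f i), IH] with x h1 h2
    rw [h1]
    simp only [Pi.add_apply, h2, Finset.sum_insert hnot]

variable {n : ℕ}

lemma sub_Ioo (i : Fin n) : Set.Ioo ((i : ℝ)/n) (((i : ℝ)+1)/n) ⊆ Set.Ioo 0 1 := by
  have hn : (0:ℝ) < n := by exact_mod_cast i.pos
  apply Set.Ioo_subset_Ioo
  · positivity
  · rw [div_le_one hn]
    have : (i : ℝ) + 1 ≤ n := by exact_mod_cast i.isLt
    linarith

lemma μ01_Ioo (i : Fin n) :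
    μ01 (Set.Ioo ((i : ℝ)/n) (((i : ℝ)+1)/n)) = ENNReal.ofReal (1/n) := by
  have hn : (0:ℝ) < n := by exact_mod_cast i.pos
  rw [Measure.restrict_apply measurableSet_Ioo,
    Set.inter_eq_self_of_subset_left (sub_Ioo i), Real.volume_Ioo]
  congr 1
  field_simp
  ring

def cind (p : ℝ) (i : Fin n) : Lp ℝ (ENNReal.ofReal p) μ01 :=
  indicatorConstLp (ENNReal.ofReal p)
    (measurableSet_Ioo (a := ((i : ℝ)/n)) (b := (((i : ℝ)+1)/n)))
    (by rw [μ01_Ioo i]; exact ENNReal.ofReal_ne_top) (1 : ℝ)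

lemma norm_cind (p : ℝ) (hp : 1 ≤ p) (i : Fin n) :
    ‖cind p i‖ = (1/(n:ℝ)) ^ (1/p) := by
  have hp0 : (0:ℝ) < p := lt_of_lt_of_le one_pos hp
  rw [cind, norm_indicatorConstLp (by simp [ENNReal.ofReal_eq_zero]; linarith) ENNReal.ofReal_ne_top]
  rw [measureReal_def, μ01_Ioo, ENNReal.toReal_ofReal (by positivity), ENNReal.toReal_ofReal hp0.le]
  simp

def cubePt (p : ℝ) (ε : Fin n → Bool) : Lp ℝ (ENNReal.ofReal p) μ01 :=
  ∑ i : Fin n, if ε i then cind p i else 0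

lemma cubePt_edge (p : ℝ) (hp : 1 ≤ p) (ε : Fin n → Bool) (i₀ : Fin n) :
    ‖cubePt p ε - cubePt p (Function.update ε i₀ (!(ε i₀)))‖ = (1/(n:ℝ)) ^ (1/p) := by
  classical
  have : cubePt p ε - cubePt p (Function.update ε i₀ (!(ε i₀)))
      = ∑ i : Fin n, ((if ε i then cind p i else 0)
          - (if Function.update ε i₀ (!(ε i₀)) i then cind p i else 0)) := by
    rw [cubePt, cubePt, Finset.sum_sub_distrib]
  rw [this, Finset.sum_eq_single i₀]
  · rw [Function.update_self]
    cases h : ε i₀ <;> simp [h, norm_cind p hp]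
  · intro j _ hj
    rw [Function.update_of_ne hj]
    simp
  · simp

lemma exists_unique_mem (x : ℝ) (hx : x ∈ Set.Ioo (0:ℝ) 1)
    (hx2 : x ∉ Set.range (fun k : ℕ => (k : ℝ)/n)) (hn : 0 < n) :
    ∃ i₀ : Fin n, x ∈ Set.Ioo ((i₀ : ℝ)/n) (((i₀ : ℝ)+1)/n) ∧
      ∀ j : Fin n, j ≠ i₀ → x ∉ Set.Ioo ((j : ℝ)/n) (((j : ℝ)+1)/n) := by
  have hnR : (0:ℝ) < n := by exact_mod_cast hn
  have hxn : 0 ≤ x * n := by nlinarith [hx.1]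
  have hne : ∀ k : ℕ, x * n ≠ k := by
    intro k hk
    exact hx2 ⟨k, by field_simp [hk]; linarith⟩
  set k := ⌊x * n⌋₊ with hk
  have h1 : (k : ℝ) ≤ x * n := Nat.floor_le hxn
  have h2 : x * n < k + 1 := Nat.lt_floor_add_one _
  have h1' : (k : ℝ) < x * n := lt_of_le_of_ne h1 (fun h => hne k h.symm)
  have hkn : k < n := by
    rw [hk, Nat.floor_lt hxn]
    have : x < 1 := hx.2
    nlinarith
  refine ⟨⟨k, hkn⟩, ?_, ?_⟩
  · constructor
    · rw [div_lt_iff₀ hnR]; exact_mod_cast h1'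
    · rw [lt_div_iff₀ hnR]; push_cast; linarith
  · intro j hj hmem
    apply hj
    have hj1 : (j : ℝ) < x * n := by
      have := hmem.1; rw [div_lt_iff₀ hnR] at this; linarith
    have hj2 : x * n < (j : ℝ) + 1 := by
      have := hmem.2; rw [lt_div_iff₀ hnR] at this; linarith
    have e1 : (j : ℕ) ≤ k := Nat.le_floor (by exact_mod_cast hj1.le)
    have e2 : k ≤ (j : ℕ) := by
      have : k < (j:ℕ) + 1 := by
        rw [hk, Nat.floor_lt hxn]; exact_mod_cast hj2
      omega
    apply Fin.ext
    simp only [Fin.val_mk] at e1 e2 ⊢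
    omega

lemma cubePt_diag (p : ℝ) (hp : 1 ≤ p) (hn : 0 < n) (ε : Fin n → Bool) :
    ‖cubePt p ε - cubePt p (bneg ε)‖ = 1 := by
  classical
  have hp0 : (0:ℝ) < p := lt_of_lt_of_le one_pos hp
  have hd : cubePt p ε - cubePt p (bneg ε)
      = ∑ i : Fin n, (if ε i then cind p i else - cind p i) := by
    rw [cubePt, cubePt, ← Finset.sum_sub_distrib]
    refine Finset.sum_congr rfl fun i _ => ?_
    cases h : ε i <;> simp [h, bneg]
  -- a.e. norm equals 1
  have hae : ∀ᵐ x ∂μ01, ‖(cubePt p ε - cubePt p (bneg ε)) x‖ = ‖(1:ℝ)‖ := by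
    have hsum := lp_coeFn_sum Finset.univ (fun i : Fin n => if ε i then cind p i else - cind p i)
    rw [← hd] at hsum
    have hinds : ∀ᵐ x ∂μ01, ∀ i : Fin n,
        (cind p i (n := n)) x = (Set.Ioo ((i : ℝ)/n) (((i : ℝ)+1)/n)).indicator (fun _ => (1:ℝ)) x := by
      rw [ae_all_iff]
      intro i
      exact indicatorConstLp_coeFn
    have hmem : ∀ᵐ x ∂μ01, x ∈ Set.Ioo (0:ℝ) 1 := ae_restrict_mem measurableSet_Ioo
    have hnr : ∀ᵐ x ∂μ01, x ∉ Set.range (fun k : ℕ => (k : ℝ)/n) := by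
      have h0 : μ01 (Set.range (fun k : ℕ => (k : ℝ)/n)) = 0 := by
        have := (Set.countable_range (fun k : ℕ => (k : ℝ)/n)).measure_zero volume
        exact le_antisymm (le_trans (Measure.restrict_le_self _) this.le) zero_le
      exact measure_eq_zero_iff_ae_notMem.mp h0
    have hnegs : ∀ᵐ x ∂μ01, ∀ i : Fin n, (-(cind p i (n := n))) x = -((cind p i (n := n)) x) := by
      rw [ae_all_iff]
      intro i
      exact Lp.coeFn_neg _
    filter_upwards [hsum, hinds, hmem, hnr, hnegs] with x h1 h2 h3 h4 h5
    rw [h1]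
    obtain ⟨i₀, hi₀, huniq⟩ := exists_unique_mem x h3 h4 hn
    have hzero : ∀ j : Fin n, j ∈ Finset.univ → j ≠ i₀ →
        (↑↑(if ε j = true then cind p j else - cind p j) : ℝ → ℝ) x = 0 := by
      intro j _ hj
      have hxj := huniq j hj
      cases h : ε j
      · rw [if_neg (by simp), h5 j, h2 j, Set.indicator_of_notMem hxj, neg_zero]
      · rw [if_pos rfl, h2 j, Set.indicator_of_notMem hxj]
    rw [Finset.sum_eq_single i₀ hzero (by simp)]
    cases h : ε i₀
    · rw [if_neg (by simp), h5 i₀, h2 i₀, Set.indicator_of_mem hi₀]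
      norm_num
    · rw [if_pos rfl, h2 i₀, Set.indicator_of_mem hi₀]
  rw [Lp.norm_def, eLpNorm_congr_norm_ae hae,
    eLpNorm_const' (1:ℝ) (by simp [ENNReal.ofReal_eq_zero]; linarith) ENNReal.ofReal_ne_top]
  simp [Real.volume_Ioo]

end CubeHelpers


/-- For `1 ≤ p ≤ 2` and `0 < α ≤ 1`: if the `α`-snowflake of `L_p(0,1)`
admits a bi-Lipschitz embedding into a Hilbert space, i.e. there are a real Hilbert
space `H`, a map `T : L_p(0,1) → H`, and constants `A, B > 0` with
`A·‖f-g‖_p^α ≤ ‖T f - T g‖ ≤ B·‖f-g‖_p^α` for all `f, g ∈ L_p(0,1)`, then `α ≤ p/2`.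
Here `L_p(0,1)` is modelled as `Lp ℝ p` of Lebesgue measure restricted to `(0,1)`. -/
theorem Lp01_snowflake_embedding_exponent_upper_bound
    (p α : ℝ) (hp1 : 1 ≤ p) (hp2 : p ≤ 2) (hα0 : 0 < α) (hα1 : α ≤ 1)
    (H : Type) [NormedAddCommGroup H] [InnerProductSpace ℝ H] [CompleteSpace H]
    (T : Lp ℝ (ENNReal.ofReal p) (volume.restrict (Set.Ioo (0 : ℝ) 1)) → H)
    (A B : ℝ) (hA : 0 < A) (hB : 0 < B)
    (hT : ∀ f g : Lp ℝ (ENNReal.ofReal p) (volume.restrict (Set.Ioo (0 : ℝ) 1)),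
      A * ‖f - g‖ ^ α ≤ ‖T f - T g‖ ∧ ‖T f - T g‖ ≤ B * ‖f - g‖ ^ α) :
    α ≤ p / 2 := by
  classical
  have hp0 : (0:ℝ) < p := lt_of_lt_of_le one_pos hp1
  by_contra hcon
  push_neg at hcon
  -- key inequality for every n ≥ 1
  have key : ∀ n : ℕ, 0 < n →
      A^2 ≤ (n:ℝ) * (B * (((1/(n:ℝ)) ^ (1/p)) ^ α))^2 := by
    intro n hn
    set g : (Fin n → Bool) → H := fun ε => T (cubePt p ε) with hg
    have h1 : ∀ ε : Fin n → Bool, A^2 ≤ ‖g ε - g (bneg ε)‖^2 := by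
      intro ε
      have h := (hT (cubePt p ε) (cubePt p (bneg ε))).1
      rw [cubePt_diag p hp1 hn ε, Real.one_rpow, mul_one] at h
      exact pow_le_pow_left₀ hA.le h 2
    have h2 : ∀ (i : Fin n) (ε : Fin n → Bool),
        ‖g ε - g (Function.update ε i (!(ε i)))‖^2
          ≤ (B * (((1/(n:ℝ)) ^ (1/p)) ^ α))^2 := by
      intro i ε
      have h := (hT (cubePt p ε) (cubePt p (Function.update ε i (!(ε i))))).2
      rw [cubePt_edge p hp1 ε i] at h
      exact pow_le_pow_left₀ (norm_nonneg _) h 2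
    have E := enflo n g
    set K : ℝ := (Fintype.card (Fin n → Bool) : ℝ) with hK
    have hKpos : 0 < K := by
      rw [hK]
      exact_mod_cast Fintype.card_pos
    have L : K * A^2 ≤ ∑ ε : Fin n → Bool, ‖g ε - g (bneg ε)‖^2 := by
      calc K * A^2 = ∑ _ε : Fin n → Bool, A^2 := by
            rw [Finset.sum_const, nsmul_eq_mul, Finset.card_univ, hK]
        _ ≤ _ := Finset.sum_le_sum fun ε _ => h1 ε
    have R : ∑ i : Fin n, ∑ ε : Fin n → Bool,
          ‖g ε - g (Function.update ε i (!(ε i)))‖^2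
        ≤ (n:ℝ) * K * (B * (((1/(n:ℝ)) ^ (1/p)) ^ α))^2 := by
      calc ∑ i : Fin n, ∑ ε : Fin n → Bool,
            ‖g ε - g (Function.update ε i (!(ε i)))‖^2
          ≤ ∑ _i : Fin n, ∑ _ε : Fin n → Bool,
              (B * (((1/(n:ℝ)) ^ (1/p)) ^ α))^2 :=
            Finset.sum_le_sum fun i _ => Finset.sum_le_sum fun ε _ => h2 i ε
        _ = (n:ℝ) * K * (B * (((1/(n:ℝ)) ^ (1/p)) ^ α))^2 := by
            rw [Finset.sum_const, Finset.sum_const, smul_smul, nsmul_eq_mul]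
            simp only [Finset.card_univ, Fintype.card_fin]
            push_cast
            ring
    have : K * A^2 ≤ K * ((n:ℝ) * (B * (((1/(n:ℝ)) ^ (1/p)) ^ α))^2) := by
      calc K * A^2 ≤ (n:ℝ) * K * (B * (((1/(n:ℝ)) ^ (1/p)) ^ α))^2 :=
            le_trans L (le_trans E R)
        _ = K * ((n:ℝ) * (B * (((1/(n:ℝ)) ^ (1/p)) ^ α))^2) := by ring
    exact le_of_mul_le_mul_left this hKpos
  -- now derive a contradiction
  set t : ℝ := 2*α/p - 1 with ht_def
  have ht : 0 < t := by
    have : 1 < 2*α/p := by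
      rw [lt_div_iff₀ hp0]; linarith
    simp only [ht_def]; linarith
  set x : ℝ := (B^2/A^2) ^ (1/t) with hx_def
  have hx0 : 0 ≤ x := Real.rpow_nonneg (by positivity) _
  set n : ℕ := ⌈x⌉₊ + 1 with hn_def
  have hn : 0 < n := Nat.succ_pos _
  set r : ℝ := (n:ℝ) with hr_def
  have hr0 : 0 < r := by rw [hr_def]; exact_mod_cast hn
  have hxr : x < r := by
    have h1 : x ≤ (⌈x⌉₊ : ℝ) := Nat.le_ceil x
    have h2 : r = (⌈x⌉₊ : ℝ) + 1 := by rw [hr_def, hn_def]; push_cast; ring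
    linarith
  -- simplify key n
  have keyn := key n hn
  have e1 : ((1/r : ℝ)^(1/p))^α = (1/r)^(α/p) := by
    rw [← Real.rpow_mul (by positivity)]
    congr 1; ring
  have e2 : ((1/r : ℝ)^(α/p))^(2:ℕ) = (1/r)^(2*α/p) := by
    rw [← Real.rpow_natCast ((1/r)^(α/p)) 2, ← Real.rpow_mul (by positivity)]
    congr 1; push_cast; ring
  have e3 : (1/r : ℝ)^(2*α/p) = (r^(2*α/p))⁻¹ := by
    rw [one_div, Real.inv_rpow hr0.le]
  have e4 : r^(2*α/p) = r * r^t := by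
    have : 2*α/p = 1 + t := by rw [ht_def]; ring
    rw [this, Real.rpow_add hr0, Real.rpow_one]
  have hrt : 0 < r ^ t := Real.rpow_pos_of_pos hr0 t
  have keyn' : A^2 ≤ B^2 / r^t := by
    have expand : (n:ℝ) * (B * (((1/(n:ℝ)) ^ (1/p)) ^ α))^2 = B^2 / r^t := by
      rw [← hr_def, mul_pow, e1, e2, e3, e4]
      field_simp
    rw [expand] at keyn
    exact keyn
  have hA2 : A^2 * r^t ≤ B^2 := (le_div_iff₀ hrt).mp keyn'
  -- but r^t > B^2/A^2
  have hxt : x^t = B^2/A^2 := by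
    rw [hx_def, ← Real.rpow_mul (by positivity), one_div_mul_cancel ht.ne', Real.rpow_one]
  have hgt : B^2/A^2 < r^t := by
    rw [← hxt]
    exact Real.rpow_lt_rpow hx0 hxr ht
  have : B^2 < A^2 * r^t := by
    have h := mul_lt_mul_of_pos_left hgt (by positivity : (0:ℝ) < A^2)
    rw [mul_div_cancel₀ _ (by positivity : (A^2 : ℝ) ≠ 0)] at h
    exact h
  linarith
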